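/- Let n ≥ 1 and let a_0,…,a_{n−1} be integers. Let C be the n×n integer circulant matrix with first row (a_0,…,a_{n−1}), and let p(t) = a_0 + a_1 t + ⋯ + a_{n−1} t^{n−1}. Then det C ∈ {1, −1} if and only if for every divisor d of n, p(ζ_d) is a unit of the ring ℤ[ζ_d], where ζ_d ∈ ℂ is a primitive dth root of unity. -/

import Mathlib

open Finset Polynomial

noncomputable def circP (n : ℕ) (a : Fin n → ℤ) (z : ℂ) : ℂ :=
  ∑ i : Fin n, (a i : ℂ) * z ^ (i : ℕ)

lemma circ_det_eq (n : ℕ) (hn : 1 ≤ n) (a : Fin n → ℤ) {ω : ℂ}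
    (hω : IsPrimitiveRoot ω n) :
    ((Matrix.det (Matrix.of fun i j : Fin n => a (j - i)) : ℤ) : ℂ) =
      ∏ k : Fin n, circP n a (ω ^ (k : ℕ)) := by
  haveI : NeZero n := ⟨Nat.one_le_iff_ne_zero.mp hn⟩
  have hωn : ω ^ n = 1 := hω.pow_eq_one
  have key : ∀ x y : Fin n, ω ^ ((x + y : Fin n) : ℕ) = ω ^ (x : ℕ) * ω ^ (y : ℕ) := by
    intro x y
    rw [Fin.val_add, ← pow_eq_pow_mod _ hωn, pow_add]
  set M : Matrix (Fin n) (Fin n) ℂ :=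
    Matrix.of (fun i j : Fin n => ((a (j - i) : ℤ) : ℂ)) with hM
  set V : Matrix (Fin n) (Fin n) ℂ := Matrix.vandermonde (fun i : Fin n => ω ^ (i : ℕ)) with hV
  have hMV : M * V = V * Matrix.diagonal (fun k : Fin n => circP n a (ω ^ (k : ℕ))) := by
    ext i k
    rw [Matrix.mul_apply, Matrix.mul_diagonal]
    rw [← Equiv.sum_comp (Equiv.addLeft i) (fun j => M i j * V j k)]
    have hterm : ∀ m : Fin n,
        M i (Equiv.addLeft i m) * V (Equiv.addLeft i m) k
          = (ω ^ (i : ℕ)) ^ (k : ℕ) * ((a m : ℂ) * (ω ^ (k : ℕ)) ^ (m : ℕ)) := by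
      intro m
      have h1 : M i (Equiv.addLeft i m) = (a m : ℂ) := by
        simp [hM, Equiv.coe_addLeft, add_sub_cancel_left]
      have h2 : V (Equiv.addLeft i m) k = (ω ^ (i : ℕ)) ^ (k : ℕ) * (ω ^ (k : ℕ)) ^ (m : ℕ) := by
        simp only [hV, Matrix.vandermonde, Equiv.coe_addLeft, Matrix.of_apply]
        rw [key i m, mul_pow, pow_right_comm ω (m : ℕ) (k : ℕ)]
      rw [h1, h2]; ring
    rw [Finset.sum_congr rfl (fun m _ => hterm m), ← Finset.mul_sum]
    simp only [circP, hV, Matrix.vandermonde]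
    rfl
  have hdet := congrArg Matrix.det hMV
  rw [Matrix.det_mul, Matrix.det_mul, Matrix.det_diagonal] at hdet
  have hVne : V.det ≠ 0 := by
    rw [hV, Matrix.det_vandermonde_ne_zero_iff]
    intro x y h
    exact Fin.ext (hω.pow_inj x.isLt y.isLt h)
  have hMdet : ((Matrix.det (Matrix.of fun i j : Fin n => a (j - i)) : ℤ) : ℂ) = M.det := by
    have h := RingHom.map_det (Int.castRingHom ℂ) (Matrix.of fun i j : Fin n => a (j - i))
    exact h
  rw [hMdet]
  rw [mul_comm] at hdet
  exact mul_left_cancel₀ hVne hdet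

lemma circ_prod_partition (n : ℕ) (hn : 1 ≤ n) (a : Fin n → ℤ) {ω : ℂ}
    (hω : IsPrimitiveRoot ω n) :
    ∏ k : Fin n, circP n a (ω ^ (k : ℕ)) =
      ∏ d ∈ n.divisors, ∏ η ∈ primitiveRoots d ℂ, circP n a η := by
  have hnpos : 0 < n := hn
  haveI : NeZero n := ⟨Nat.one_le_iff_ne_zero.mp hn⟩
  have h1 : ∏ k : Fin n, circP n a (ω ^ (k : ℕ))
      = ∏ η ∈ Polynomial.nthRootsFinset n (1 : ℂ), circP n a η := by
    apply Finset.prod_bij (fun (k : Fin n) _ => ω ^ (k : ℕ))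
    · intro k _
      refine (Polynomial.mem_nthRootsFinset hnpos 1).mpr ?_
      rw [← pow_mul, mul_comm, pow_mul, hω.pow_eq_one, one_pow]
    · intro x _ y _ h
      exact Fin.ext (hω.pow_inj x.isLt y.isLt h)
    · intro η hη
      obtain ⟨i, hi, rfl⟩ :=
        hω.eq_pow_of_pow_eq_one ((Polynomial.mem_nthRootsFinset hnpos 1).mp hη)
      exact ⟨⟨i, hi⟩, Finset.mem_univ _, rfl⟩
    · intro k _; rfl
  rw [h1, IsPrimitiveRoot.nthRoots_one_eq_biUnion_primitiveRoots, Finset.prod_biUnion]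
  intro i _ j _ hij
  exact IsPrimitiveRoot.disjoint hij

lemma circ_prim_prod_int (n : ℕ) (a : Fin n → ℤ) {d : ℕ} (hd : 0 < d) :
    ∃ m : ℤ, ∏ η ∈ primitiveRoots d ℂ, circP n a η = (m : ℂ) := by
  lift d to ℕ+ using hd
  haveI : NeZero ((d : ℕ) : ℚ) := ⟨Nat.cast_ne_zero.mpr d.ne_zero⟩
  haveI : IsCyclotomicExtension {(d : ℕ)} ℚ (CyclotomicField d ℚ) :=
    CyclotomicField.isCyclotomicExtension (d : ℕ) ℚ
  haveI : FiniteDimensional ℚ (CyclotomicField d ℚ) :=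
    IsCyclotomicExtension.finiteDimensional (S := {(d : ℕ)}) (K := ℚ) (CyclotomicField d ℚ)
  have hζ₀ := IsCyclotomicExtension.zeta_spec (d : ℕ) ℚ (CyclotomicField d ℚ)
  set ζ₀ := IsCyclotomicExtension.zeta (d : ℕ) ℚ (CyclotomicField d ℚ) with hζ₀def
  have hirr : Irreducible (Polynomial.cyclotomic d ℚ) :=
    Polynomial.cyclotomic.irreducible_rat d.pos
  set x : CyclotomicField d ℚ := ∑ i : Fin n, (a i : CyclotomicField d ℚ) * ζ₀ ^ (i : ℕ) with hx
  have hxint : IsIntegral ℤ x := by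
    have hζint : IsIntegral ℤ ζ₀ := hζ₀.isIntegral d.pos
    have : x ∈ integralClosure ℤ (CyclotomicField d ℚ) := by
      refine Subalgebra.sum_mem _ fun i _ => Subalgebra.mul_mem _ ?_ (Subalgebra.pow_mem _ hζint _)
      exact Subalgebra.intCast_mem _ _
    exact this
  have hnormint : IsIntegral ℤ (Algebra.norm ℚ x) := Algebra.isIntegral_norm ℚ hxint
  obtain ⟨m, hm⟩ := IsIntegrallyClosed.isIntegral_iff.mp hnormint
  refine ⟨m, ?_⟩
  have hemb := Algebra.norm_eq_prod_embeddings ℚ ℂ x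
  have hσ : ∀ σ : CyclotomicField d ℚ →ₐ[ℚ] ℂ, σ x = circP n a (σ ζ₀) := by
    intro σ
    simp [hx, circP, map_sum, map_mul, map_pow, map_intCast]
  have hprod : ∏ σ : CyclotomicField d ℚ →ₐ[ℚ] ℂ, σ x
      = ∏ η ∈ primitiveRoots (d : ℕ) ℂ, circP n a η := by
    rw [← Finset.prod_coe_sort (primitiveRoots (d : ℕ) ℂ) (fun η => circP n a η)]
    rw [Finset.prod_congr rfl fun σ _ => hσ σ]
    exact Fintype.prod_equiv (hζ₀.embeddingsEquivPrimitiveRoots ℂ hirr)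
      (fun σ => circP n a (σ ζ₀)) (fun η => circP n a (η : ℂ))
      (fun σ => congrArg (circP n a) (hζ₀.embeddingsEquivPrimitiveRoots_apply_coe ℂ hirr σ).symm)
  rw [← hprod, ← hemb, ← hm]
  simp

lemma circ_mem_closure (n : ℕ) (a : Fin n → ℤ) {d : ℕ} [NeZero d] {ζ : ℂ}
    (hζ : IsPrimitiveRoot ζ d) {η : ℂ} (hη : η ^ d = 1) :
    circP n a η ∈ Subring.closure ({ζ} : Set ℂ) := by
  obtain ⟨k, _, rfl⟩ := hζ.eq_pow_of_pow_eq_one hη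
  rw [circP]
  refine Subring.sum_mem _ fun i _ => Subring.mul_mem _ (intCast_mem _ _) ?_
  have hζmem : ζ ∈ Subring.closure ({ζ} : Set ℂ) :=
    Subring.subset_closure (Set.mem_singleton ζ)
  exact pow_mem (pow_mem hζmem k) (i : ℕ)



/-- The `n×n` integer circulant matrix with first row `(a₀,…,a_{n-1})`
(entry `(i,j)` equal to `a_{(j-i) mod n}`) has determinant `±1` if and only if for every
divisor `d` of `n` and every primitive `d`th root of unity `ζ_d ∈ ℂ`, the value
`p(ζ_d) = ∑ i a_i ζ_d^i` is a unit of the subring `ℤ[ζ_d]` of `ℂ`. -/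
theorem stmt_8 (n : ℕ) (hn : 1 ≤ n) (a : Fin n → ℤ) :
    (Matrix.det (Matrix.of fun i j : Fin n => a (j - i)) = 1 ∨
     Matrix.det (Matrix.of fun i j : Fin n => a (j - i)) = -1) ↔
    ∀ d : ℕ, d ∣ n → ∀ ζd : ℂ, IsPrimitiveRoot ζd d →
      ∃ u ∈ Subring.closure ({ζd} : Set ℂ),
        (∑ i : Fin n, (a i : ℂ) * ζd ^ (i : ℕ)) * u = 1 := by
  haveI : NeZero n := ⟨Nat.one_le_iff_ne_zero.mp hn⟩
  have hnne : n ≠ 0 := NeZero.ne n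
  have hnpos : 0 < n := hn
  have hω : IsPrimitiveRoot (Complex.exp (2 * Real.pi * Complex.I / n)) n :=
    Complex.isPrimitiveRoot_exp n hnne
  set ω : ℂ := Complex.exp (2 * Real.pi * Complex.I / n) with hωdef
  set D : ℤ := Matrix.det (Matrix.of fun i j : Fin n => a (j - i)) with hDdef
  have hdet : (D : ℂ) = ∏ d ∈ n.divisors, ∏ η ∈ primitiveRoots d ℂ, circP n a η :=
    (circ_det_eq n hn a hω).trans (circ_prod_partition n hn a hω)
  constructor
  · rintro hD1 d hd ζ hζ
    have hd0 : 0 < d := Nat.pos_of_dvd_of_pos hd hnpos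
    haveI : NeZero d := ⟨hd0.ne'⟩
    have hdd : d ∈ n.divisors := Nat.mem_divisors.mpr ⟨hd, hnne⟩
    have hζmem : ζ ∈ primitiveRoots d ℂ := (mem_primitiveRoots hd0).mpr hζ
    set Q : ℂ := ∏ η ∈ (primitiveRoots d ℂ).erase ζ, circP n a η with hQdef
    set R : ℂ := ∏ d' ∈ n.divisors.erase d, ∏ η ∈ primitiveRoots d' ℂ, circP n a η with hRdef
    have hfact : circP n a ζ * Q * R = (D : ℂ) := by
      rw [hdet, ← Finset.mul_prod_erase _ _ hdd, ← Finset.mul_prod_erase _ _ hζmem]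
    set S := Subring.closure ({ζ} : Set ℂ) with hSdef
    have hQmem : Q ∈ S := by
      refine Subring.prod_mem _ fun η hη => ?_
      have hη' := Finset.mem_of_mem_erase hη
      rw [mem_primitiveRoots hd0] at hη'
      exact circ_mem_closure n a hζ hη'.pow_eq_one
    have hRmem : R ∈ S := by
      refine Subring.prod_mem _ fun d' hd' => ?_
      have hd'0 : 0 < d' :=
        Nat.pos_of_mem_divisors (Finset.mem_of_mem_erase hd')
      obtain ⟨m, hm⟩ := circ_prim_prod_int n a hd'0
      rw [hm]
      exact intCast_mem S m
    have hDD : (D : ℂ) * (D : ℂ) = 1 := by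
      rcases hD1 with h | h <;> simp [h]
    refine ⟨(D : ℂ) * (Q * R), Subring.mul_mem _ (intCast_mem S D)
      (Subring.mul_mem _ hQmem hRmem), ?_⟩
    calc (∑ i : Fin n, (a i : ℂ) * ζ ^ (i : ℕ)) * ((D : ℂ) * (Q * R))
        = (circP n a ζ * Q * R) * (D : ℂ) := by rw [circP]; ring
      _ = 1 := by rw [hfact, hDD]
  · intro h
    have hu : ∀ k : Fin n, ∃ u : ℂ, IsIntegral ℤ u ∧ circP n a (ω ^ (k : ℕ)) * u = 1 := by
      intro k
      set g : ℕ := Nat.gcd n (k : ℕ) with hgdef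
      have hg0 : 0 < g := Nat.gcd_pos_of_pos_left _ hnpos
      have hgdvd : g ∣ n := Nat.gcd_dvd_left n _
      have hcop : ((k : ℕ) / g).Coprime (n / g) := by
        have := Nat.coprime_div_gcd_div_gcd (m := (k : ℕ)) (n := n)
          (by rw [Nat.gcd_comm]; exact hg0)
        rw [Nat.gcd_comm] at this
        exact this
      have h1 : IsPrimitiveRoot (ω ^ g) (n / g) :=
        hω.pow hnpos (Nat.mul_div_cancel' hgdvd).symm
      have hprim : IsPrimitiveRoot (ω ^ (k : ℕ)) (n / g) := by
        have h2 := h1.pow_of_coprime ((k : ℕ) / g) hcop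
        rwa [← pow_mul, Nat.mul_div_cancel' (Nat.gcd_dvd_right n (k : ℕ))] at h2
      obtain ⟨u, huS, hu1⟩ := h (n / g) (Nat.div_dvd_of_dvd hgdvd) (ω ^ (k : ℕ)) hprim
      refine ⟨u, ?_, hu1⟩
      have hle : Subring.closure ({ω ^ (k : ℕ)} : Set ℂ) ≤ (integralClosure ℤ ℂ).toSubring := by
        refine Subring.closure_le.mpr ?_
        rintro x rfl
        exact ((hω.isIntegral hnpos).pow _ : IsIntegral ℤ (ω ^ (k : ℕ)))
      exact hle huS
    choose u huint hueq using hu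
    have hprod : (D : ℂ) * ∏ k : Fin n, u k = 1 := by
      rw [circ_det_eq n hn a hω, ← Finset.prod_mul_distrib]
      simp [hueq]
    have hDz : D ≠ 0 := by
      intro h0
      rw [h0] at hprod
      simp at hprod
    have hUint : IsIntegral ℤ (∏ k : Fin n, u k) := by
      have : (∏ k : Fin n, u k) ∈ integralClosure ℤ ℂ :=
        Subalgebra.prod_mem _ fun k _ => huint k
      exact this
    have hinv : (algebraMap ℚ ℂ) ((D : ℚ)⁻¹) = ∏ k : Fin n, u k := by
      have hcast : (algebraMap ℚ ℂ) ((D : ℚ)) = (D : ℂ) := by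
        simp
      rw [map_inv₀, hcast]
      exact (eq_inv_of_mul_eq_one_left (by rw [mul_comm]; exact hprod)).symm
    have hqint : IsIntegral ℤ ((D : ℚ)⁻¹) := by
      have := hinv ▸ hUint
      exact (isIntegral_algebraMap_iff (algebraMap ℚ ℂ).injective).mp this
    obtain ⟨m, hm⟩ := IsIntegrallyClosed.isIntegral_iff.mp hqint
    have hDm : D * m = 1 := by
      have h1 : (D : ℚ) * (m : ℚ) = 1 := by
        rw [show ((m : ℤ) : ℚ) = (D : ℚ)⁻¹ from by rw [← hm]; simp]
        field_simp
      exact_mod_cast h1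
    exact Int.isUnit_iff.mp (IsUnit.of_mul_eq_one m hDm)
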